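/- Let H be a complex Hilbert space, A a continuous linear operator on H, ω₁, ω₂ ∈ H, α ∈ ℂ, and Ã = A + α(·,ω₁)ω₂. Let λ ∈ ℂ be such that A − λ is invertible, and suppose φ ∈ H, φ ≠ 0, satisfies Ãφ = λφ. Then α·((A − λ)⁻¹ω₂, ω₁) = −1, the number (φ, ω₁) is nonzero, and φ = −α(φ,ω₁)·(A − λ)⁻¹ω₂; in particular φ is a nonzero scalar multiple of (A − λ)⁻¹ω₂. -/

import Mathlib

open ContinuousLinearMap

local notation "⟪" x ", " y "⟫" => @inner ℂ _ _ x y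

/-- The nonsymmetric rank-one perturbation `Ã = A + α(·,ω₁)ω₂`. -/
noncomputable def rankOnePert {H : Type*} [NormedAddCommGroup H] [InnerProductSpace ℂ H]
    (A : H →L[ℂ] H) (α : ℂ) (ω₁ ω₂ : H) : H →L[ℂ] H :=
  A + α • (innerSL ℂ ω₁).smulRight ω₂

/-- Eigenvalue relation (fnd) of Proposition 2: if `Ãφ = λφ`, `φ ≠ 0`, and `A - λ` is
invertible with inverse `L`, then `α((A - λ)⁻¹ω₂, ω₁) = -1`, `(φ, ω₁) ≠ 0`, and
`φ = -α(φ, ω₁)(A - λ)⁻¹ω₂`. -/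
theorem eigenvector_formula {H : Type*} [NormedAddCommGroup H] [InnerProductSpace ℂ H]
    [CompleteSpace H] (A : H →L[ℂ] H) (ω₁ ω₂ : H) (α : ℂ) (lam : ℂ)
    (L : H →L[ℂ] H) (hL1 : (A - lam • 1) ∘L L = 1) (hL2 : L ∘L (A - lam • 1) = 1)
    (φ : H) (hφ : φ ≠ 0) (heig : rankOnePert A α ω₁ ω₂ φ = lam • φ) :
    α * ⟪ω₁, L ω₂⟫ = -1 ∧ ⟪ω₁, φ⟫ ≠ 0 ∧ φ = (-(α * ⟪ω₁, φ⟫)) • L ω₂ := by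
  set c : ℂ := ⟪ω₁, φ⟫ with hc
  have h1 : (A - lam • 1) φ = (-(α * c)) • ω₂ := by
    have : A φ + (α * c) • ω₂ = lam • φ := by
      simpa [rankOnePert, smulRight_apply, innerSL_apply_apply, smul_smul, mul_comm] using heig
    simp only [sub_apply, smul_apply, one_apply_eq_self]
    rw [eq_comm, neg_smul, neg_eq_iff_add_eq_zero]
    rw [← this]
    abel
  have hφeq : φ = (-(α * c)) • L ω₂ := by
    have h2 : L ((A - lam • 1) φ) = φ := by
      have := congrArg (fun T : H →L[ℂ] H => T φ) hL2
      simpa using this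
    rw [← h2, h1, map_smul]
  have hcne : c ≠ 0 := by
    intro h0
    apply hφ
    rw [hφeq, h0, mul_zero, neg_zero, zero_smul]
  have key : α * ⟪ω₁, L ω₂⟫ = -1 := by
    have h3 : c = (-(α * c)) * ⟪ω₁, L ω₂⟫ := by
      conv_lhs => rw [hc, hφeq]
      rw [inner_smul_right]
    have h4 : c * (1 + α * ⟪ω₁, L ω₂⟫) = 0 := by ring_nf; linear_combination h3
    rcases mul_eq_zero.mp h4 with h | h
    · exact absurd h hcne
    · linear_combination h
  exact ⟨key, hcne, hφeq⟩
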